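/- arXiv:1409.0222 — 2 statements merged into one kernel-verified Lean document; each statement's English description precedes it below -/
import Mathlib

section
/- Define σ : ω×ω → ω by σ(n,0) = 1 and σ(n,m+1) = n^{σ(n,m)}; define ρ ∈ ω^ω by ρ(0) = 2 and ρ(i+1) = σ(ρ(i), i+3); for x ∈ ω^ω define x^[0] := x and x^[k+1](i) := 2^{ρ(i)²·x^[k](i)}, and let R^ρ := {x ∈ ω^ω : for every k < ω, x^[k](i) ≤ ρ(i+1) for all but finitely many i}. Then: (a) the identity function belongs to R^ρ; (b) if x ∈ R^ρ, then the functions i ↦ 2^{x(i)}, i ↦ x(i)^{i·ρ(i)^i}, i ↦ i·x(i), and i ↦ |[x(i)]^{≤ρ(i)^i}| (the number of subsets of {0,…,x(i)−1} of size at most ρ(i)^i) all belong to R^ρ; (c) if x ∈ R^ρ, then the function i ↦ max_{j≤i} x(j) belongs to R^ρ; (d) if x ∈ R^ρ, then for all but finitely many i, i·|[x(i−1)]^{≤i}|^i ≤ ρ(i). -/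
open Set Filter Cardinal

/-- `I` is an ideal on `ω`: contains all finite sets, downward closed, closed under unions. -/
def IsIdealOn (I : Set (Set ℕ)) : Prop :=
  (∀ x : Set ℕ, x.Finite → x ∈ I) ∧
  (∀ x y : Set ℕ, x ⊆ y → y ∈ I → x ∈ I) ∧
  (∀ x y : Set ℕ, x ∈ I → y ∈ I → x ∪ y ∈ I)

/-- The pair `⟨A, B⟩` is `I`-orthogonal. -/
def IOrthogonal (I A B : Set (Set ℕ)) : Prop := ∀ s ∈ A, ∀ t ∈ B, s ∩ t ∈ I

/-- `C` separates the pair `⟨A, B⟩` with respect to `I`. -/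
def ISeparates (I A B : Set (Set ℕ)) (C : Set ℕ) : Prop :=
  (∀ s ∈ A, s ∩ C ∈ I) ∧ (∀ t ∈ B, t \ C ∈ I)

/-- The pair `⟨A, B⟩` is an `I`-gap. -/
def IsIGap (I A B : Set (Set ℕ)) : Prop :=
  IOrthogonal I A B ∧ ∀ C : Set ℕ, ¬ ISeparates I A B C

/-- There is an `I`-(ω, lam)-gap. -/
def HasOmegaGap (I : Set (Set ℕ)) (lam : Cardinal) : Prop :=
  ∃ A B : Set (Set ℕ), IsIGap I A B ∧ #A = ℵ₀ ∧ #B = lam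

/-- `a` is a partition of `ω` into nonempty finite sets. -/
def IsPartitionFin (a : ℕ → Set ℕ) : Prop :=
  (∀ i, (a i).Nonempty) ∧ (∀ i, (a i).Finite) ∧
  (∀ i j, i ≠ j → Disjoint (a i) (a j)) ∧ (⋃ i, a i) = Set.univ

/-- `φ` is a submeasure on the powerset of the set `s`. -/
def IsSubmeasureOn (s : Set ℕ) (φ : Set ℕ → ℝ) : Prop :=
  φ ∅ = 0 ∧ (∀ x, x ⊆ s → 0 ≤ φ x) ∧
  (∀ x y, x ⊆ y → y ⊆ s → φ x ≤ φ y) ∧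
  (∀ x y, x ⊆ s → y ⊆ s → φ (x ∪ y) ≤ φ x + φ y)

/-- `I = I⟨a_i, φ_i⟩` is the fragmented ideal determined by the partition `a`
and the submeasures `φ`. -/
def IsFragmentation (I : Set (Set ℕ)) (a : ℕ → Set ℕ) (φ : ℕ → Set ℕ → ℝ) : Prop :=
  IsPartitionFin a ∧ (∀ i, IsSubmeasureOn (a i) (φ i)) ∧
  ∀ x : Set ℕ, x ∈ I ↔ ∃ K : ℝ, ∀ i, φ i (x ∩ a i) ≤ K

/-- Gradual fragmentation of `⟨a_i, φ_i⟩`. -/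
def GraduallyFragmented (a : ℕ → Set ℕ) (φ : ℕ → Set ℕ → ℝ) : Prop :=
  ∀ k : ℕ, ∃ m : ℕ, ∀ l : ℕ, ∀ᶠ i in atTop,
    ∀ B : Finset (Set ℕ), (∀ b ∈ B, b ⊆ a i) → B.card ≤ l →
      (∀ b ∈ B, φ i b ≤ (k : ℝ)) → φ i (⋃₀ (↑B : Set (Set ℕ))) ≤ (m : ℝ)

/-- The restriction `I ↾ X` is tall. -/
def IsTallOn (I : Set (Set ℕ)) (X : Set ℕ) : Prop :=
  ∀ Y : Set ℕ, Y ⊆ X → Y.Infinite → ∃ Z, Z ⊆ Y ∧ Z.Infinite ∧ Z ∈ I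

def IsTall (I : Set (Set ℕ)) : Prop := IsTallOn I Set.univ

def SomewhereTall (I : Set (Set ℕ)) : Prop := ∃ X : Set ℕ, X ∉ I ∧ IsTallOn I X

def NowhereTall (I : Set (Set ℕ)) : Prop := ¬ SomewhereTall I

/-- The unbounding number `𝔟`. -/
noncomputable def unboundingNumber : Cardinal :=
  sInf {c | ∃ F : Set (ℕ → ℕ), #F = c ∧
    ∀ g : ℕ → ℕ, ∃ f ∈ F, ¬ ∀ᶠ i in atTop, f i ≤ g i}

/-- The additivity of the Lebesgue-null ideal, `add(N)`. -/
noncomputable def addNull : Cardinal :=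
  sInf {c | ∃ F : Set (Set ℝ), #F = c ∧ (∀ s ∈ F, MeasureTheory.volume s = 0) ∧
    MeasureTheory.volume (⋃₀ F) ≠ 0}

/-- The elementary exponentiation `σ(n,0) = 1`, `σ(n,m+1) = n^{σ(n,m)}`. -/
def sigmaExp (n : ℕ) : ℕ → ℕ
  | 0 => 1
  | m + 1 => n ^ sigmaExp n m

/-- `ρ(0) = 2`, `ρ(i+1) = σ(ρ(i), i+3)`. -/
def rhoFn : ℕ → ℕ
  | 0 => 2
  | i + 1 => sigmaExp (rhoFn i) (i + 3)

/-- `x^[0] = x`, `x^[k+1](i) = 2^{ρ(i)² · x^[k](i)}`. -/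
def iterX (x : ℕ → ℕ) : ℕ → ℕ → ℕ
  | 0 => x
  | k + 1 => fun i => 2 ^ (rhoFn i ^ 2 * iterX x k i)

/-- `R^ρ = {x : ∀ k, x^[k](i) ≤ ρ(i+1) for all but finitely many i}`. -/
def Rrho : Set (ℕ → ℕ) :=
  {x | ∀ k : ℕ, ∀ᶠ i in atTop, iterX x k i ≤ rhoFn (i + 1)}

/-- The number of subsets of `{0, …, n-1}` of cardinality at most `k`. -/
def countSubsets (n k : ℕ) : ℕ :=
  ((Finset.range n).powerset.filter fun s => s.card ≤ k).card

lemma sigma_mono {n : ℕ} (hn : 2 ≤ n) : Monotone (sigmaExp n) := by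
  apply monotone_nat_of_le_succ
  intro m
  calc sigmaExp n m ≤ 2 ^ sigmaExp n m := le_of_lt (Nat.lt_two_pow_self)
    _ ≤ n ^ sigmaExp n m := Nat.pow_le_pow_left hn _
    _ = sigmaExp n (m+1) := rfl

lemma sigma_ge {n : ℕ} (hn : 2 ≤ n) : ∀ m, m + 1 ≤ sigmaExp n m
  | 0 => le_refl 1
  | m+1 => by
    have ih := sigma_ge hn m
    calc m + 2 ≤ 2 ^ (m+1) := Nat.lt_two_pow_self (n := m+1)
      _ ≤ 2 ^ sigmaExp n m := Nat.pow_le_pow_right (by norm_num) ih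
      _ ≤ n ^ sigmaExp n m := Nat.pow_le_pow_left hn _
      _ = sigmaExp n (m+1) := rfl

lemma rho_ge : ∀ i, i + 2 ≤ rhoFn i
  | 0 => le_refl 2
  | i+1 => by
    have h2 : 2 ≤ rhoFn i := le_trans (by omega) (rho_ge i)
    have := sigma_ge h2 (i+3)
    show i + 3 ≤ sigmaExp (rhoFn i) (i+3)
    omega

lemma two_le_rho (i : ℕ) : 2 ≤ rhoFn i := le_trans (by omega) (rho_ge i)

lemma sigma_one (n : ℕ) : sigmaExp n 1 = n := by simp [sigmaExp]

lemma rho_mono : Monotone rhoFn := by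
  apply monotone_nat_of_le_succ
  intro i
  have h2 := two_le_rho i
  have h := sigma_mono h2 (show 1 ≤ i+3 by omega)
  rw [sigma_one] at h
  exact h

lemma aux_two_pow : ∀ s, 2 ≤ s → s + 2 ≤ 2 ^ s := by
  intro s hs
  induction s with
  | zero => omega
  | succ t ih =>
    rcases Nat.lt_or_ge t 2 with h | h
    · interval_cases t
      · omega
      · norm_num
    · have := ih h; rw [pow_succ]; omega

lemma step (n : ℕ) (hn : 2 ≤ n) (j v : ℕ) (hv : v ≤ sigmaExp n (j + 2)) :
    2 ^ (n ^ 2 * v) ≤ sigmaExp n (j + 4) := by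
  have haux : 2 + sigmaExp n (j+1) ≤ sigmaExp n (j+2) := by
    have hs2 : 2 ≤ sigmaExp n (j+1) := by
      have h := sigma_mono hn (show 1 ≤ j+1 by omega)
      rw [sigma_one] at h; omega
    calc 2 + sigmaExp n (j+1) ≤ 2 ^ sigmaExp n (j+1) := by
          have := aux_two_pow _ hs2; omega
      _ ≤ n ^ sigmaExp n (j+1) := Nat.pow_le_pow_left hn _
      _ = sigmaExp n (j+2) := rfl
  have h2 : n^2 * v ≤ sigmaExp n (j+3) := by
    calc n^2 * v ≤ n^2 * sigmaExp n (j+2) := Nat.mul_le_mul_left _ hv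
      _ = n^2 * n ^ sigmaExp n (j+1) := rfl
      _ = n ^ (2 + sigmaExp n (j+1)) := by rw [pow_add]
      _ ≤ n ^ sigmaExp n (j+2) := Nat.pow_le_pow_right (by omega) haux
      _ = sigmaExp n (j+3) := rfl
  calc 2 ^ (n^2*v) ≤ n ^ (n^2*v) := Nat.pow_le_pow_left hn _
    _ ≤ n ^ sigmaExp n (j+3) := Nat.pow_le_pow_right (by omega) h2
    _ = sigmaExp n (j+4) := rfl

lemma iterX_mono (x y : ℕ → ℕ) (i : ℕ) (h : x i ≤ y i) : ∀ k, iterX x k i ≤ iterX y k i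
  | 0 => h
  | k+1 => by
    show 2 ^ (rhoFn i ^ 2 * iterX x k i) ≤ 2 ^ (rhoFn i ^ 2 * iterX y k i)
    exact Nat.pow_le_pow_right (by norm_num) (Nat.mul_le_mul_left _ (iterX_mono x y i h k))

lemma iterX_iterX (x : ℕ → ℕ) (c : ℕ) : ∀ k i, iterX (iterX x c) k i = iterX x (c+k) i
  | 0, i => rfl
  | k+1, i => by
    show 2 ^ (rhoFn i ^ 2 * iterX (iterX x c) k i) = iterX x (c+(k+1)) i
    rw [iterX_iterX x c k i]
    rfl

lemma iter_sigma (y : ℕ → ℕ) (i : ℕ) : ∀ (k m : ℕ), 2 ≤ m → y i ≤ sigmaExp (rhoFn i) m →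
    iterX y k i ≤ sigmaExp (rhoFn i) (m + 2 * k)
  | 0, m, _, h => by simpa [iterX] using h
  | k+1, m, hm, h => by
    obtain ⟨m', rfl⟩ := Nat.exists_eq_add_of_le hm
    have ih := iter_sigma y i k (2+m') hm h
    have hs := step (rhoFn i) (two_le_rho i) (m' + 2*k) (iterX y k i) (by
      calc iterX y k i ≤ sigmaExp (rhoFn i) (2+m'+2*k) := ih
        _ = sigmaExp (rhoFn i) (m'+2*k+2) := by congr 1; omega)
    show 2 ^ (rhoFn i ^ 2 * iterX y k i) ≤ sigmaExp (rhoFn i) (2 + m' + 2*(k+1))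
    calc 2 ^ (rhoFn i ^ 2 * iterX y k i) ≤ sigmaExp (rhoFn i) (m'+2*k+4) := hs
      _ = sigmaExp (rhoFn i) (2+m'+2*(k+1)) := by congr 1; omega

lemma lemB (y : ℕ → ℕ) (m : ℕ) (h : ∀ᶠ i in atTop, y i ≤ sigmaExp (rhoFn i) (m + 2)) :
    y ∈ Rrho := by
  intro k
  have h2 : ∀ᶠ i in atTop, m + 2 + 2 * k ≤ i + 3 :=
    eventually_atTop.2 ⟨m + 2*k, fun i hi => by omega⟩
  filter_upwards [h, h2] with i hy hik
  calc iterX y k i ≤ sigmaExp (rhoFn i) (m + 2 + 2*k) := iter_sigma y i k (m+2) (by omega) hy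
    _ ≤ sigmaExp (rhoFn i) (i + 3) := sigma_mono (two_le_rho i) hik
    _ = rhoFn (i+1) := rfl

lemma lemA {x : ℕ → ℕ} (hx : x ∈ Rrho) (y : ℕ → ℕ) (c : ℕ)
    (h : ∀ᶠ i in atTop, y i ≤ iterX x c i) : y ∈ Rrho := by
  intro k
  filter_upwards [hx (c + k), h] with i h1 h2
  calc iterX y k i ≤ iterX (iterX x c) k i := iterX_mono _ _ i h2 k
    _ = iterX x (c+k) i := iterX_iterX x c k i
    _ ≤ rhoFn (i+1) := h1

lemma countSubsets_le (n k : ℕ) : countSubsets n k ≤ 2 ^ n := by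
  unfold countSubsets
  calc _ ≤ (Finset.range n).powerset.card := Finset.card_filter_le _ _
    _ = 2 ^ n := by rw [Finset.card_powerset, Finset.card_range]

lemma mul_le_pow_aux (a x : ℕ) (ha : 2 ≤ a) (hx : 1 ≤ x) : x * a ≤ a ^ x := by
  obtain ⟨y, rfl⟩ := Nat.exists_eq_add_of_le hx
  have h1 : 1 + y ≤ a ^ y := by
    calc 1 + y ≤ 2 ^ y := by have := Nat.lt_two_pow_self (n := y); omega
      _ ≤ a ^ y := Nat.pow_le_pow_left ha y
  calc (1+y) * a ≤ a ^ y * a := Nat.mul_le_mul_right _ h1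
    _ = a ^ (y+1) := (pow_succ a y).symm
    _ = a ^ (1+y) := by rw [add_comm]

/-- Closure properties of `R^ρ`:
(a) the identity belongs to `R^ρ`;
(b) if `x ∈ R^ρ` then `2^x`, `x^{id·ρ^{id}}`, `id·x` and `i ↦ |[x(i)]^{≤ρ(i)^i}|`
belong to `R^ρ`;
(c) if `x ∈ R^ρ` then `i ↦ max_{j ≤ i} x(j)` belongs to `R^ρ`;
(d) if `x ∈ R^ρ` then `i · |[x(i-1)]^{≤i}|^i ≤ ρ(i)` for all but finitely many `i`. -/
theorem Rrho_closure_properties :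
    ((fun i => i) ∈ Rrho) ∧
    (∀ x ∈ Rrho,
      ((fun i => 2 ^ x i) ∈ Rrho) ∧
      ((fun i => x i ^ (i * rhoFn i ^ i)) ∈ Rrho) ∧
      ((fun i => i * x i) ∈ Rrho) ∧
      ((fun i => countSubsets (x i) (rhoFn i ^ i)) ∈ Rrho)) ∧
    (∀ x ∈ Rrho, (fun i => (Finset.range (i + 1)).sup x) ∈ Rrho) ∧
    (∀ x ∈ Rrho, ∀ᶠ i in atTop, i * countSubsets (x (i - 1)) i ^ i ≤ rhoFn i) := by
  have hid : (fun i => i) ∈ Rrho := by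
    apply lemB _ 0
    apply Eventually.of_forall
    intro i
    have h1 := sigma_mono (two_le_rho i) (show 1 ≤ 0+2 by omega)
    rw [sigma_one] at h1
    have h2 := rho_ge i
    show i ≤ sigmaExp (rhoFn i) (0+2)
    omega
  refine ⟨hid, ?_, ?_, ?_⟩
  · -- part (b)
    intro x hx
    refine ⟨?_, ?_, ?_, ?_⟩
    · -- 2^x
      apply lemA hx _ 1
      apply Eventually.of_forall
      intro i
      show 2 ^ x i ≤ 2 ^ (rhoFn i ^ 2 * x i)
      refine Nat.pow_le_pow_right (by norm_num) ?_
      have := two_le_rho i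
      exact Nat.le_mul_of_pos_left _ (by positivity)
    · -- x ^ (i * ρ^i)
      apply lemA hx _ 2
      apply Eventually.of_forall
      intro i
      have hr2 : 2 ≤ rhoFn i := two_le_rho i
      have hri : i + 2 ≤ rhoFn i := rho_ge i
      set r := rhoFn i with hr
      show x i ^ (i * r ^ i) ≤ 2 ^ (r ^ 2 * 2 ^ (r ^ 2 * x i))
      rcases Nat.eq_zero_or_pos (x i) with h0 | h1
      · rcases Nat.eq_zero_or_pos i with rfl | hipos
        · rw [h0]
          simp
          exact Nat.one_le_two_pow
        · have hpos : 0 < i * r ^ i := Nat.mul_pos hipos (Nat.pow_pos (n := i) (by omega))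
          rw [h0, zero_pow hpos.ne']
          exact Nat.zero_le _
      · have hE : i * r ^ i ≤ 2 ^ (r ^ 2) := by
          calc i * r ^ i ≤ r * r ^ i := Nat.mul_le_mul_right _ (by omega)
            _ = r ^ (i+1) := by ring
            _ ≤ r ^ r := Nat.pow_le_pow_right (by omega) (by omega)
            _ ≤ (2 ^ r) ^ r := Nat.pow_le_pow_left (le_of_lt (Nat.lt_two_pow_self (n := r))) r
            _ = 2 ^ (r * r) := by rw [← pow_mul]
            _ = 2 ^ (r ^ 2) := by rw [sq]
        have ha2 : 2 ≤ 2 ^ (r ^ 2) := by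
          calc (2:ℕ) = 2 ^ 1 := rfl
            _ ≤ 2 ^ (r ^ 2) := Nat.pow_le_pow_right (by norm_num) (Nat.one_le_pow _ _ (by omega))
        calc x i ^ (i * r ^ i) ≤ (2 ^ x i) ^ (i * r ^ i) :=
              Nat.pow_le_pow_left (le_of_lt (Nat.lt_two_pow_self)) _
          _ = 2 ^ (x i * (i * r ^ i)) := by rw [← pow_mul]
          _ ≤ 2 ^ (x i * 2 ^ (r ^ 2)) :=
              Nat.pow_le_pow_right (by norm_num) (Nat.mul_le_mul_left _ hE)
          _ ≤ 2 ^ ((2 ^ (r ^ 2)) ^ (x i)) :=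
              Nat.pow_le_pow_right (by norm_num) (mul_le_pow_aux _ _ ha2 h1)
          _ = 2 ^ (2 ^ (r ^ 2 * x i)) := by rw [← pow_mul]
          _ ≤ 2 ^ (r ^ 2 * 2 ^ (r ^ 2 * x i)) :=
              Nat.pow_le_pow_right (by norm_num) (Nat.le_mul_of_pos_left _ (by positivity))
    · -- i * x
      apply lemA hx _ 1
      apply Eventually.of_forall
      intro i
      show i * x i ≤ 2 ^ (rhoFn i ^ 2 * x i)
      have hri := rho_ge i
      have h1 : i ≤ rhoFn i ^ 2 := le_trans (by omega) (Nat.le_self_pow (by norm_num) _)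
      calc i * x i ≤ rhoFn i ^ 2 * x i := Nat.mul_le_mul_right _ h1
        _ ≤ 2 ^ (rhoFn i ^ 2 * x i) := le_of_lt (Nat.lt_two_pow_self)
    · -- countSubsets
      apply lemA hx _ 1
      apply Eventually.of_forall
      intro i
      show countSubsets (x i) (rhoFn i ^ i) ≤ 2 ^ (rhoFn i ^ 2 * x i)
      calc countSubsets (x i) (rhoFn i ^ i) ≤ 2 ^ x i := countSubsets_le _ _
        _ ≤ 2 ^ (rhoFn i ^ 2 * x i) := by
            refine Nat.pow_le_pow_right (by norm_num) ?_
            have := two_le_rho i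
            exact Nat.le_mul_of_pos_left _ (by positivity)
  · -- part (c)
    intro x hx
    obtain ⟨N, hN⟩ := eventually_atTop.1 (hx 0)
    set C := (Finset.range N).sup x with hC
    have hbound : ∀ᶠ i in atTop,
        (Finset.range (i+1)).sup x ≤ max (sigmaExp (rhoFn i) 2) (x i) := by
      refine eventually_atTop.2 ⟨N + C, fun i hi => ?_⟩
      apply Finset.sup_le
      intro j hj
      rw [Finset.mem_range] at hj
      have hρσ : rhoFn i ≤ sigmaExp (rhoFn i) 2 := by
        have h := sigma_mono (two_le_rho i) (show 1 ≤ 2 by omega)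
        rw [sigma_one] at h; exact h
      rcases Nat.lt_or_ge j i with hji | hji
      · rcases Nat.lt_or_ge j N with hjN | hjN
        · have hxC : x j ≤ C := Finset.le_sup (Finset.mem_range.2 hjN)
          have : C ≤ rhoFn i := le_trans (by omega) (rho_ge i)
          exact le_trans (le_trans hxC (le_trans this hρσ)) (le_max_left _ _)
        · have h1 : x j ≤ rhoFn (j+1) := hN j hjN
          have h2 : rhoFn (j+1) ≤ rhoFn i := rho_mono (by omega)
          exact le_trans (le_trans h1 (le_trans h2 hρσ)) (le_max_left _ _)
      · have : j = i := by omega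
        subst this
        exact le_max_right _ _
    intro k
    have h2 : ∀ᶠ i in atTop, 2 + 2 * k ≤ i + 3 :=
      eventually_atTop.2 ⟨2 * k, fun i hi => by omega⟩
    filter_upwards [hbound, hx k, h2] with i hb hxk hik
    rcases le_total (x i) (sigmaExp (rhoFn i) 2) with h | h
    · have hy : (Finset.range (i+1)).sup x ≤ sigmaExp (rhoFn i) 2 :=
        le_trans hb (max_le (le_refl _) h)
      calc iterX (fun i => (Finset.range (i + 1)).sup x) k i
          ≤ sigmaExp (rhoFn i) (2 + 2*k) := iter_sigma _ i k 2 (le_refl 2) hy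
        _ ≤ sigmaExp (rhoFn i) (i + 3) := sigma_mono (two_le_rho i) hik
        _ = rhoFn (i+1) := rfl
    · have hy : (Finset.range (i+1)).sup x ≤ x i :=
        le_trans hb (max_le h (le_refl _))
      calc iterX (fun i => (Finset.range (i + 1)).sup x) k i ≤ iterX x k i :=
            iterX_mono _ _ i hy k
        _ ≤ rhoFn (i+1) := hxk
  · -- part (d)
    intro x hx
    obtain ⟨N, hN⟩ := eventually_atTop.1 (hx 2)
    refine eventually_atTop.2 ⟨N + 1, fun i hi => ?_⟩
    have hi1 : 1 ≤ i := by omega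
    have hb : iterX x 2 (i-1) ≤ rhoFn i := by
      have h := hN (i-1) (by omega)
      rwa [Nat.sub_add_cancel hi1] at h
    set n := x (i-1) with hn
    set r := rhoFn (i-1) with hr
    have heq : iterX x 2 (i-1) = 2 ^ (r ^ 2 * 2 ^ (r ^ 2 * n)) := rfl
    have hir : i ≤ r ^ 2 := by
      have h1 := rho_ge (i-1)
      have h2 : i ≤ r := by omega
      exact le_trans h2 (Nat.le_self_pow (by norm_num) _)
    have hn1 : n + 1 ≤ 2 ^ (r ^ 2 * n) := by
      have h1 : n < 2 ^ n := Nat.lt_two_pow_self (n := n)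
      have h2 : 2 ^ n ≤ 2 ^ (r ^ 2 * n) := by
        refine Nat.pow_le_pow_right (by norm_num) ?_
        have := two_le_rho (i-1)
        exact Nat.le_mul_of_pos_left _ (by positivity)
      omega
    calc i * countSubsets n i ^ i
        ≤ 2 ^ i * (2 ^ n) ^ i :=
          Nat.mul_le_mul (le_of_lt (Nat.lt_two_pow_self (n := i)))
            (Nat.pow_le_pow_left (countSubsets_le _ _) i)
      _ = 2 ^ ((n + 1) * i) := by rw [← pow_mul, ← pow_add]; ring_nf
      _ ≤ 2 ^ (r ^ 2 * 2 ^ (r ^ 2 * n)) := by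
          refine Nat.pow_le_pow_right (by norm_num) ?_
          calc (n + 1) * i ≤ 2 ^ (r ^ 2 * n) * (r ^ 2) := Nat.mul_le_mul hn1 hir
            _ = r ^ 2 * 2 ^ (r ^ 2 * n) := by ring
      _ ≤ rhoFn i := heq ▸ hb
end

section
/- Let φ be a lower semicontinuous submeasure on P(ω) such that the exhaustive ideal I = Exh(φ) is a non-trivial ideal on ω. Then every I-orthogonal pair ⟨𝒜,ℬ⟩ in which 𝒜 is a countable partition of ω and |ℬ| < 𝔟 is separated by some C ⊆ ω; consequently there is no I-(ω,λ)-gap with λ < 𝔟, i.e., 𝔟(I) ≥ 𝔟. -/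
open Set Filter Cardinal

open ENNReal

/-- The exhaustive ideal `Exh(φ) = {x ⊆ ω : lim_n φ(x ∖ n) = 0}`. -/
def ExhIdeal (φ : Set ℕ → ℝ≥0∞) : Set (Set ℕ) :=
  {x | Tendsto (fun n : ℕ => φ (x \ Set.Iio n)) atTop (nhds 0)}


private lemma union_lt_mem_ideal {I : Set (Set ℕ)} (hI : IsIdealOn I)
    (x : ℕ → Set ℕ) (n : ℕ) (hx : ∀ k < n, x k ∈ I) :
    (⋃ k < n, x k) ∈ I := by
  induction n with
  | zero => simpa using hI.1 ∅ finite_empty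
  | succ n ih =>
      have h : (⋃ k < n + 1, x k) = (⋃ k < n, x k) ∪ x n := by
        ext m
        simp only [mem_iUnion, mem_union, Nat.lt_succ_iff_lt_or_eq]
        constructor
        · rintro ⟨k, (hk | rfl), hm⟩
          · exact Or.inl ⟨k, hk, hm⟩
          · exact Or.inr hm
        · rintro (⟨k, hk, hm⟩ | hm)
          · exact ⟨k, Or.inl hk, hm⟩
          · exact ⟨n, Or.inr rfl, hm⟩
      rw [h]
      exact hI.2.2 _ _ (ih fun k hk => hx k (hk.trans (Nat.lt_succ_self n)))
        (hx n (Nat.lt_succ_self n))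

open ENNReal in
private lemma phi_finset_union {φ : Set ℕ → ℝ≥0∞}
    (hempty : φ ∅ = 0)
    (hsubadd : ∀ x y : Set ℕ, φ (x ∪ y) ≤ φ x + φ y)
    (x : ℕ → Set ℕ) (s : Finset ℕ) :
    φ (⋃ j ∈ s, x j) ≤ ∑ j ∈ s, φ (x j) := by
  classical
  induction s using Finset.induction with
  | empty => simp [hempty]
  | insert _ _ ha ih =>
      rename_i a s
      rw [Finset.set_biUnion_insert, Finset.sum_insert ha]
      exact (hsubadd _ _).trans (add_le_add_right ih _)

open ENNReal in
private lemma phi_ctble_subadd {φ : Set ℕ → ℝ≥0∞}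
    (hempty : φ ∅ = 0)
    (hmono : ∀ x y : Set ℕ, x ⊆ y → φ x ≤ φ y)
    (hsubadd : ∀ x y : Set ℕ, φ (x ∪ y) ≤ φ x + φ y)
    (hlsc : ∀ x : Set ℕ, Tendsto (fun n : ℕ => φ (x ∩ Set.Iio n)) atTop (nhds (φ x)))
    (x : ℕ → Set ℕ) :
    φ (⋃ i, x i) ≤ ∑' i, φ (x i) := by
  classical
  refine le_of_tendsto' (hlsc _) fun n => ?_
  set idx : ℕ → ℕ := fun k => if h : ∃ i, k ∈ x i then h.choose else 0 with hidxdef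
  set T : Finset ℕ := (Finset.range n).image idx with hT
  have hsub : (⋃ i, x i) ∩ Set.Iio n ⊆ ⋃ j ∈ T, x j := by
    rintro k ⟨hk1, hk2⟩
    have h : ∃ i, k ∈ x i := mem_iUnion.mp hk1
    have hk : k ∈ x (idx k) := by
      simp only [hidxdef, dif_pos h]; exact h.choose_spec
    exact mem_biUnion (Finset.mem_image_of_mem idx (Finset.mem_range.mpr hk2)) hk
  calc φ ((⋃ i, x i) ∩ Set.Iio n) ≤ φ (⋃ j ∈ T, x j) := hmono _ _ hsub
    _ ≤ ∑ j ∈ T, φ (x j) := phi_finset_union hempty hsubadd x T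
    _ ≤ ∑' j, φ (x j) := ENNReal.sum_le_tsum T

/-- Let `φ` be a lower semicontinuous submeasure on `P(ω)` such that `I = Exh(φ)` is a
non-trivial ideal on `ω`. Then every `I`-orthogonal pair `⟨A, B⟩` in which `A` is a
countable partition of `ω` and `|B| < 𝔟` is separated by some `C ⊆ ω`; consequently
there is no `I`-(ω,λ)-gap with `λ < 𝔟`, i.e. `𝔟(I) ≥ 𝔟`. -/
theorem b_le_rothberger_of_exhaustive
    (φ : Set ℕ → ℝ≥0∞)
    (hempty : φ ∅ = 0)
    (hfin : ∀ x : Set ℕ, x.Finite → φ x ≠ ⊤)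
    (hmono : ∀ x y : Set ℕ, x ⊆ y → φ x ≤ φ y)
    (hsubadd : ∀ x y : Set ℕ, φ (x ∪ y) ≤ φ x + φ y)
    (hlsc : ∀ x : Set ℕ, Tendsto (fun n : ℕ => φ (x ∩ Set.Iio n)) atTop (nhds (φ x)))
    (hideal : IsIdealOn (ExhIdeal φ))
    (hnontriv : Set.univ ∉ ExhIdeal φ) :
    (∀ A : ℕ → Set ℕ, (∀ i j, i ≠ j → Disjoint (A i) (A j)) → (⋃ i, A i) = Set.univ →
      ∀ B : Set (Set ℕ), #B < unboundingNumber →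
        (∀ i : ℕ, ∀ b ∈ B, A i ∩ b ∈ ExhIdeal φ) →
        ∃ C : Set ℕ, (∀ i : ℕ, A i ∩ C ∈ ExhIdeal φ) ∧ ∀ b ∈ B, b \ C ∈ ExhIdeal φ) ∧
    (∀ lam : Cardinal, HasOmegaGap (ExhIdeal φ) lam → unboundingNumber ≤ lam) := by
  
  have key : ∀ A : ℕ → Set ℕ, (∀ i j, i ≠ j → Disjoint (A i) (A j)) → (⋃ i, A i) = Set.univ →
      ∀ B : Set (Set ℕ), #B < unboundingNumber →
        (∀ i : ℕ, ∀ b ∈ B, A i ∩ b ∈ ExhIdeal φ) →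
        ∃ C : Set ℕ, (∀ i : ℕ, A i ∩ C ∈ ExhIdeal φ) ∧ ∀ b ∈ B, b \ C ∈ ExhIdeal φ := by
    intro A hdisj hcover B hB horth
    have hhalf : ∀ i : ℕ, (0:ℝ≥0∞) < (1/2)^i := fun i => ENNReal.pow_pos (by norm_num) i
    -- the functions f_b
    set S : Set ℕ → ℕ → Set ℕ :=
      fun b i => {N : ℕ | ∀ n ≥ N, φ ((A i ∩ b) \ Set.Iio n) ≤ (1/2)^i} with hS
    set fB : Set ℕ → ℕ → ℕ := fun b i => sInf (S b i) with hfB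
    have hSne : ∀ b ∈ B, ∀ i, (S b i).Nonempty := by
      intro b hb i
      obtain ⟨N, hN⟩ := (ENNReal.tendsto_atTop_zero.mp (horth i b hb)) ((1/2)^i) (hhalf i)
      exact ⟨N, hN⟩
    have hfBspec : ∀ b ∈ B, ∀ i, ∀ n ≥ fB b i, φ ((A i ∩ b) \ Set.Iio n) ≤ (1/2)^i :=
      fun b hb i => Nat.sInf_mem (hSne b hb i)
    -- dominating function g
    obtain ⟨g, hg⟩ : ∃ g : ℕ → ℕ, ∀ b ∈ B, ∀ᶠ i in atTop, fB b i ≤ g i := by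
      by_contra h
      push_neg at h
      have hmem : #(fB '' B) ∈ {c | ∃ F : Set (ℕ → ℕ), #F = c ∧
          ∀ g : ℕ → ℕ, ∃ f ∈ F, ¬ ∀ᶠ i in atTop, f i ≤ g i} := by
        refine ⟨fB '' B, rfl, fun g => ?_⟩
        obtain ⟨b, hbB, hbg⟩ := h g
        exact ⟨fB b, mem_image_of_mem _ hbB, Filter.not_eventually.mpr (hbg.mono fun _ h => not_le.mpr h)⟩
      have h1 : unboundingNumber ≤ #(fB '' B) := csInf_le' hmem
      exact lt_irrefl _ ((h1.trans mk_image_le).trans_lt hB)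
    refine ⟨⋃ i, A i ∩ Set.Iio (g i), ?_, ?_⟩
    · -- A i ∩ C is finite
      intro i
      have hsub : A i ∩ (⋃ j, A j ∩ Set.Iio (g j)) ⊆ Set.Iio (g i) := by
        rintro x ⟨hxA, hxC⟩
        obtain ⟨j, hxj, hxlt⟩ := mem_iUnion.mp hxC
        rcases eq_or_ne j i with rfl | hne
        · exact hxlt
        · exact absurd hxA (disjoint_left.mp (hdisj j i hne) hxj)
      exact hideal.1 _ ((finite_Iio _).subset hsub)
    · intro b hb
      set D : Set ℕ := ⋃ i, ((A i ∩ b) \ Set.Iio (g i)) with hD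
      have hsubD : b \ (⋃ i, A i ∩ Set.Iio (g i)) ⊆ D := by
        rintro x ⟨hxb, hxC⟩
        have : x ∈ ⋃ i, A i := hcover ▸ mem_univ x
        obtain ⟨i, hxi⟩ := mem_iUnion.mp this
        refine mem_iUnion.mpr ⟨i, ⟨hxi, hxb⟩, fun hxlt => ?_⟩
        exact hxC (mem_iUnion.mpr ⟨i, hxi, hxlt⟩)
      refine hideal.2.1 _ D hsubD ?_
      -- D ∈ ExhIdeal φ
      rw [ExhIdeal, mem_setOf_eq, ENNReal.tendsto_atTop_zero]
      intro ε hε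
      obtain ⟨i₀, hi₀⟩ := eventually_atTop.mp (hg b hb)
      have hbnd : ∀ i ≥ i₀, φ ((A i ∩ b) \ Set.Iio (g i)) ≤ (1/2)^i :=
        fun i hi => hfBspec b hb i (g i) (hi₀ i hi)
      have htail : Tendsto (fun m : ℕ => ∑' k : ℕ, ((1:ℝ≥0∞)/2)^(k+m)) atTop (nhds 0) :=
        ENNReal.tendsto_sum_nat_add (fun i => (1/2)^i)
          (by rw [ENNReal.tsum_geometric]; norm_num)
      obtain ⟨M, hM⟩ := (ENNReal.tendsto_atTop_zero.mp htail) (ε/2) (ENNReal.half_pos hε.ne')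
      set m : ℕ := max M i₀ with hm
      set E : Set ℕ := ⋃ k < m, (A k ∩ b) with hE
      have hEI : E ∈ ExhIdeal φ :=
        union_lt_mem_ideal hideal _ m (fun k _ => horth k b hb)
      obtain ⟨N, hN⟩ := (ENNReal.tendsto_atTop_zero.mp hEI) (ε/2) (ENNReal.half_pos hε.ne')
      refine ⟨N, fun n hn => ?_⟩
      have hsplit : D \ Set.Iio n ⊆
          (E \ Set.Iio n) ∪ ⋃ k, ((A (k+m) ∩ b) \ Set.Iio (g (k+m))) := by
        rintro x ⟨hxD, hxn⟩
        obtain ⟨i, hxi⟩ := mem_iUnion.mp hxD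
        rcases lt_or_ge i m with him | him
        · exact Or.inl ⟨mem_iUnion.mpr ⟨i, mem_iUnion.mpr ⟨him, hxi.1⟩⟩, hxn⟩
        · refine Or.inr (mem_iUnion.mpr ⟨i - m, ?_⟩)
          rwa [Nat.sub_add_cancel him]
      calc φ (D \ Set.Iio n)
          ≤ φ ((E \ Set.Iio n) ∪ ⋃ k, ((A (k+m) ∩ b) \ Set.Iio (g (k+m)))) :=
            hmono _ _ hsplit
        _ ≤ φ (E \ Set.Iio n) + φ (⋃ k, ((A (k+m) ∩ b) \ Set.Iio (g (k+m)))) := hsubadd _ _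
        _ ≤ ε/2 + ∑' k : ℕ, φ ((A (k+m) ∩ b) \ Set.Iio (g (k+m))) := by
            gcongr
            · exact hN n hn
            · exact phi_ctble_subadd hempty hmono hsubadd hlsc _
        _ ≤ ε/2 + ∑' k : ℕ, ((1:ℝ≥0∞)/2)^(k+m) := by
            gcongr with k
            exact hbnd (k+m) (le_trans (le_max_right M i₀) (Nat.le_add_left m k))
        _ ≤ ε/2 + ε/2 := by gcongr; exact hM m (le_max_left M i₀)
        _ = ε := ENNReal.add_halves ε
  refine ⟨key, ?_⟩
  classical
  rintro lam ⟨A, B, hgap, hA, hBcard⟩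
  by_contra hlt
  rw [not_le] at hlt
  -- enumerate A
  have hAct : A.Countable := by
    rw [← Set.countable_coe_iff]; exact Cardinal.mk_le_aleph0_iff.mp hA.le
  have hAne : A.Nonempty := by
    rw [← Set.nonempty_coe_sort, ← Cardinal.mk_ne_zero_iff, hA]
    exact Cardinal.aleph0_ne_zero
  obtain ⟨e, he⟩ := hAct.exists_eq_range hAne
  set U : Set ℕ := ⋃ n, e n with hU
  set R : Set ℕ := Uᶜ with hR
  set P : ℕ → Set ℕ := fun n => {x | x ∈ e n ∧ ∀ k < n, x ∉ e k} with hP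
  set Q : ℕ → Set ℕ := fun n => if n = 0 then P 0 ∪ R else P n with hQ
  have hPdisj : ∀ i j, i ≠ j → Disjoint (P i) (P j) := by
    intro i j hne
    rw [Set.disjoint_left]
    rintro x ⟨hxi, hxi'⟩ ⟨hxj, hxj'⟩
    rcases hne.lt_or_gt with h | h
    · exact hxj' i h hxi
    · exact hxi' j h hxj
  have hPU : ∀ i, P i ⊆ U := fun i x hx => mem_iUnion.mpr ⟨i, hx.1⟩
  have hUP : ∀ x ∈ U, ∃ m, x ∈ P m ∧ ∀ n, x ∈ e n → m ≤ n := by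
    intro x hx
    have h : ∃ n, x ∈ e n := mem_iUnion.mp hx
    exact ⟨Nat.find h, ⟨Nat.find_spec h, fun k hk => Nat.find_min h hk⟩,
      fun n hn => Nat.find_min' h hn⟩
  have hQdisj : ∀ i j, i ≠ j → Disjoint (Q i) (Q j) := by
    intro i j hne
    rw [Set.disjoint_left]
    intro x hxi hxj
    simp only [hQ] at hxi hxj
    rcases eq_or_ne i 0 with rfl | hi
    · rw [if_pos rfl] at hxi
      rw [if_neg (Ne.symm hne)] at hxj
      rcases hxi with hxi | hxi
      · exact Set.disjoint_left.mp (hPdisj 0 j hne) hxi hxj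
      · exact hxi (hPU j hxj)
    · rw [if_neg hi] at hxi
      rcases eq_or_ne j 0 with rfl | hj
      · rw [if_pos rfl] at hxj
        rcases hxj with hxj | hxj
        · exact Set.disjoint_left.mp (hPdisj i 0 hne) hxi hxj
        · exact hxj (hPU i hxi)
      · rw [if_neg hj] at hxj
        exact Set.disjoint_left.mp (hPdisj i j hne) hxi hxj
  have hQcover : (⋃ i, Q i) = Set.univ := by
    rw [Set.eq_univ_iff_forall]
    intro x
    by_cases hx : x ∈ U
    · obtain ⟨m, hm, -⟩ := hUP x hx
      refine mem_iUnion.mpr ⟨m, ?_⟩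
      simp only [hQ]
      rcases eq_or_ne m 0 with rfl | hm0
      · rw [if_pos rfl]; exact Or.inl hm
      · rwa [if_neg hm0]
    · refine mem_iUnion.mpr ⟨0, ?_⟩
      simp only [hQ, if_pos rfl]
      exact Or.inr hx
  set B' : Set (Set ℕ) := (fun b => b \ R) '' B with hB'
  have hB'card : #B' < unboundingNumber := by
    refine lt_of_le_of_lt ?_ hlt
    rw [← hBcard]; exact mk_image_le
  have horth' : ∀ i : ℕ, ∀ b' ∈ B', Q i ∩ b' ∈ ExhIdeal φ := by
    rintro i b' ⟨b, hb, rfl⟩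
    have heiA : e i ∈ A := he ▸ mem_range_self i
    refine hideal.2.1 _ (e i ∩ b) ?_ (hgap.1 (e i) heiA b hb)
    rintro x ⟨hxQ, hxb, hxR⟩
    simp only [hQ] at hxQ
    rcases eq_or_ne i 0 with rfl | hi
    · rw [if_pos rfl] at hxQ
      rcases hxQ with hxQ | hxQ
      · exact ⟨hxQ.1, hxb⟩
      · exact absurd hxQ hxR
    · rw [if_neg hi] at hxQ
      exact ⟨hxQ.1, hxb⟩
  obtain ⟨C, hC1, hC2⟩ := key Q hQdisj hQcover B' hB'card horth'
  refine hgap.2 (C ∪ R) ⟨?_, ?_⟩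
  · -- first side
    intro s hs
    rw [he] at hs
    obtain ⟨n, rfl⟩ := hs
    have hsub : e n ∩ (C ∪ R) ⊆ ⋃ k < n + 1, (Q k ∩ C) := by
      rintro x ⟨hxe, hxCR⟩
      have hxU : x ∈ U := mem_iUnion.mpr ⟨n, hxe⟩
      have hxC : x ∈ C := by
        rcases hxCR with h | h
        · exact h
        · exact absurd hxU h
      obtain ⟨m, hm, hmle⟩ := hUP x hxU
      refine mem_iUnion.mpr ⟨m, mem_iUnion.mpr ⟨Nat.lt_succ_of_le (hmle n hxe), ?_, hxC⟩⟩
      simp only [hQ]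
      rcases eq_or_ne m 0 with rfl | hm0
      · rw [if_pos rfl]; exact Or.inl hm
      · rwa [if_neg hm0]
    exact hideal.2.1 _ _ hsub (union_lt_mem_ideal hideal _ (n+1) (fun k _ => hC1 k))
  · intro t ht
    have : t \ (C ∪ R) = (t \ R) \ C := by
      rw [Set.diff_diff, Set.union_comm]
    rw [this]
    exact hC2 (t \ R) (mem_image_of_mem _ ht)
end
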